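/- g has a local non-global minimizer if and only if there exists t* in the open interval (max{2ν−2α₂, 0}, 2ν−2α₁) such that h(t*) = 0 and h'(t*) > 0, where h(t) = Σᵢ 4ψᵢ²/(t − 2ν + 2αᵢ)² − t; moreover in that case the local non-global minimizer is the point w with wᵢ = 2ψᵢ/(t* − 2ν + 2αᵢ). -/

import Mathlib

open Finset

namespace Stmt9


/-- Master expansion identity for g(w+z). -/
lemma master {n : ℕ} (α ψ : Fin n → ℝ) (ν : ℝ)
    (g : (Fin n → ℝ) → ℝ)
    (hg : ∀ w, g w = (1/2) * ((1/2) * ∑ i, (w i)^2 - ν)^2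
        + (1/2) * ∑ i, α i * (w i)^2 - ∑ i, ψ i * w i)
    (w z : Fin n → ℝ) :
    g (fun i => w i + z i) = g w
      + (∑ i, (((∑ j, (w j)^2)/2 - ν + α i) * w i - ψ i) * z i)
      + (1/2) * ∑ i, ((∑ j, (w j)^2)/2 - ν + α i) * z i^2
      + (1/2) * (∑ i, w i * z i + (∑ i, z i^2)/2)^2 := by
  rw [hg, hg]
  have h1 : ∑ i, (w i + z i)^2 = ∑ i, (w i)^2 + (2*∑ i, w i*z i + ∑ i, (z i)^2) := by
    rw [Finset.mul_sum, ← Finset.sum_add_distrib, ← Finset.sum_add_distrib]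
    exact Finset.sum_congr rfl fun i _ => by ring
  have h2 : ∑ i, α i * (w i + z i)^2
      = ∑ i, α i * (w i)^2 + (2*∑ i, α i * (w i*z i) + ∑ i, α i * (z i)^2) := by
    rw [Finset.mul_sum, ← Finset.sum_add_distrib, ← Finset.sum_add_distrib]
    exact Finset.sum_congr rfl fun i _ => by ring
  have h3 : ∑ i, ψ i * (w i + z i) = ∑ i, ψ i * w i + ∑ i, ψ i * z i := by
    rw [← Finset.sum_add_distrib]
    exact Finset.sum_congr rfl fun i _ => by ring
  have h4 : ∑ i, (((∑ j, (w j)^2)/2 - ν + α i) * w i - ψ i) * z i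
      = ((∑ j, (w j)^2)/2 - ν) * ∑ i, w i * z i + ∑ i, α i * (w i * z i)
        - ∑ i, ψ i * z i := by
    rw [Finset.mul_sum, ← Finset.sum_add_distrib, ← Finset.sum_sub_distrib]
    exact Finset.sum_congr rfl fun i _ => by ring
  have h5 : ∑ i, ((∑ j, (w j)^2)/2 - ν + α i) * z i^2
      = ((∑ j, (w j)^2)/2 - ν) * ∑ i, (z i)^2 + ∑ i, α i * (z i)^2 := by
    rw [Finset.mul_sum, ← Finset.sum_add_distrib]
    exact Finset.sum_congr rfl fun i _ => by ring
  rw [h1, h2, h3, h4, h5]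
  ring



/-- From a quartic with negative leading behavior near 0, find a small bad point. -/
lemma quartic_no_min (C2 C3 C4 δ : ℝ) (h : C2 < 0 ∨ (C2 = 0 ∧ C3 ≠ 0)) (hδ : 0 < δ) :
    ∃ x : ℝ, |x| < δ ∧ C2*x^2 + C3*x^3 + C4*x^4 < 0 := by
  rcases h with hC2 | ⟨hC2, hC3⟩
  · set x := min (δ/2) (min 1 ((-C2)/(2*(|C3| + |C4| + 1)))) with hx
    have hB : 0 < |C3| + |C4| + 1 := by positivity
    have hxpos : 0 < x := by
      apply lt_min (by linarith) (lt_min one_pos (div_pos (by linarith) (by positivity)))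
    have hx1 : x ≤ 1 := le_trans (min_le_right _ _) (min_le_left _ _)
    have hx2 : x ≤ (-C2)/(2*(|C3| + |C4| + 1)) :=
      le_trans (min_le_right _ _) (min_le_right _ _)
    have hxδ : |x| < δ := by
      rw [abs_of_pos hxpos]; exact lt_of_le_of_lt (min_le_left _ _) (by linarith)
    refine ⟨x, hxδ, ?_⟩
    have h3 : C3*x^3 ≤ |C3| * x^3 := by
      have := le_abs_self C3; nlinarith [pow_pos hxpos 3]
    have h4 : C4*x^4 ≤ |C4| * x^3 := by
      have h1 := le_abs_self C4
      have h2 : x^4 ≤ x^3 := by nlinarith [pow_pos hxpos 3]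
      have habs : (0:ℝ) ≤ |C4| := abs_nonneg _
      nlinarith [pow_pos hxpos 3, pow_pos hxpos 4]
    have hmul : x * (2*(|C3| + |C4| + 1)) ≤ -C2 :=
      (le_div_iff₀ (by positivity)).mp hx2
    nlinarith [pow_pos hxpos 2, pow_pos hxpos 3, sq_nonneg x]
  · -- C2 = 0, C3 ≠ 0 : choose sign of x opposite to C3
    subst hC2
    rcases lt_or_gt_of_ne hC3 with hneg | hpos
    · -- C3 < 0 : take x > 0 small
      set x := min (δ/2) (min 1 ((-C3)/(|C4| + 1))) with hx
      have hB : 0 < |C4| + 1 := by positivity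
      have hxpos : 0 < x := lt_min (by linarith) (lt_min one_pos (div_pos (by linarith) (by positivity)))
      have hx1 : x ≤ 1 := le_trans (min_le_right _ _) (min_le_left _ _)
      have hx2 : x ≤ (-C3)/(|C4| + 1) := le_trans (min_le_right _ _) (min_le_right _ _)
      refine ⟨x, by rw [abs_of_pos hxpos]; exact lt_of_le_of_lt (min_le_left _ _) (by linarith), ?_⟩
      have h4 : C4*x^4 ≤ |C4| * x^4 := by nlinarith [le_abs_self C4, pow_pos hxpos 4]
      have hmul : x * (|C4| + 1) ≤ -C3 := (le_div_iff₀ hB).mp hx2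
      nlinarith [pow_pos hxpos 3, pow_pos hxpos 4, abs_nonneg C4]
    · -- C3 > 0 : take x < 0 small
      set y := min (δ/2) (min 1 (C3/(|C4| + 1))) with hy
      have hB : 0 < |C4| + 1 := by positivity
      have hypos : 0 < y := lt_min (by linarith) (lt_min one_pos (div_pos (by linarith) (by positivity)))
      have hy1 : y ≤ 1 := le_trans (min_le_right _ _) (min_le_left _ _)
      have hy2 : y ≤ C3/(|C4| + 1) := le_trans (min_le_right _ _) (min_le_right _ _)
      refine ⟨-y, ?_, ?_⟩
      · rw [abs_neg, abs_of_pos hypos]; exact lt_of_le_of_lt (min_le_left _ _) (by linarith)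
      · have h4 : C4*y^4 ≤ |C4| * y^4 := by nlinarith [le_abs_self C4, pow_pos hypos 4]
        have hmul : y * (|C4| + 1) ≤ C3 := (le_div_iff₀ hB).mp hy2
        have : (-y)^2 = y^2 := by ring
        nlinarith [pow_pos hypos 3, pow_pos hypos 4, abs_nonneg C4]

/-- restriction of a local min to a line through w. -/
lemma localmin_dir {n : ℕ} (g : (Fin n → ℝ) → ℝ) (w z : Fin n → ℝ)
    (hmin : IsLocalMin g w) :
    IsLocalMin (fun x : ℝ => g (fun j => w j + x * z j)) 0 := by
  have hcont : Continuous fun x : ℝ => (fun j => w j + x * z j) := by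
    apply continuous_pi
    intro j
    exact continuous_const.add (continuous_id.mul continuous_const)
  have h0 : (fun j => w j + (0:ℝ) * z j) = w := by funext j; ring
  have htend : Filter.Tendsto (fun x : ℝ => (fun j => w j + x * z j)) (nhds 0) (nhds w) := by
    have := hcont.continuousAt (x := (0:ℝ))
    rwa [ContinuousAt, h0] at this
  have hev : ∀ᶠ x in nhds (0:ℝ), g w ≤ g (fun j => w j + x * z j) := htend.eventually hmin
  have : IsLocalMin (fun x : ℝ => g (fun j => w j + x * z j)) 0 := by
    unfold IsLocalMin IsMinFilter
    simpa [h0] using hev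
  exact this

/-- extraction of a metric ball from a local min. -/
lemma localmin_ball {n : ℕ} (g : (Fin n → ℝ) → ℝ) (w : Fin n → ℝ)
    (hmin : IsLocalMin g w) :
    ∃ δ > 0, ∀ v : Fin n → ℝ, dist v w < δ → g w ≤ g v := by
  have := Metric.eventually_nhds_iff.mp hmin
  obtain ⟨δ, hδ, hball⟩ := this
  exact ⟨δ, hδ, fun v hv => hball hv⟩

/-- If g along the line through w in direction z is the given quartic with bad
coefficients, then w is not a local min. -/
lemma dir_contra {n : ℕ} (g : (Fin n → ℝ) → ℝ) (w z : Fin n → ℝ) (C2 C3 C4 : ℝ)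
    (hmin : IsLocalMin g w)
    (hform : ∀ x : ℝ, g (fun j => w j + x * z j) = g w + C2*x^2 + C3*x^3 + C4*x^4)
    (hbad : C2 < 0 ∨ (C2 = 0 ∧ C3 ≠ 0)) : False := by
  have hφ := localmin_dir g w z hmin
  obtain ⟨δ, hδ, hball⟩ := Metric.eventually_nhds_iff.mp hφ
  obtain ⟨x, hxδ, hxval⟩ := quartic_no_min C2 C3 C4 δ hbad hδ
  have hx : dist x (0:ℝ) < δ := by rwa [Real.dist_eq, sub_zero]
  have := hball hx
  simp only [] at this
  rw [hform x, hform 0] at this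
  nlinarith [this]



/-- PSD of the arrow-type quadratic form: c 0 < 0, c i > 0 for i ≠ 0,
    ∑ wᵢ²/cᵢ ≤ -1 implies ∑ cᵢ zᵢ² + (∑ wᵢ zᵢ)² ≥ 0. -/
lemma psd {n : ℕ} (hn : 2 ≤ n) (c w : Fin n → ℝ)
    (hc0 : c ⟨0, Nat.lt_of_lt_of_le two_pos hn⟩ < 0)
    (hcpos : ∀ i : Fin n, i ≠ ⟨0, Nat.lt_of_lt_of_le two_pos hn⟩ → 0 < c i)
    (hsum : ∑ i, (w i)^2 / c i ≤ -1) :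
    ∀ z : Fin n → ℝ, 0 ≤ ∑ i, c i * (z i)^2 + (∑ i, w i * z i)^2 := by
  intro z
  set i0 : Fin n := ⟨0, Nat.lt_of_lt_of_le two_pos hn⟩ with hi0
  set B : ℝ := ∑ i ∈ univ.erase i0, (w i)^2 / c i with hB
  set T : ℝ := ∑ i ∈ univ.erase i0, c i * (z i)^2 with hT
  set s : ℝ := ∑ i, w i * z i with hs
  have hmem : i0 ∈ (univ : Finset (Fin n)) := mem_univ _
  have hsplit1 : (w i0)^2 / c i0 + B = ∑ i, (w i)^2 / c i :=
    Finset.add_sum_erase univ (fun i => (w i)^2 / c i) hmem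
  have hsplit2 : c i0 * (z i0)^2 + T = ∑ i, c i * (z i)^2 :=
    Finset.add_sum_erase univ (fun i => c i * (z i)^2) hmem
  have hsplit3 : w i0 * z i0 + ∑ i ∈ univ.erase i0, w i * z i = s :=
    Finset.add_sum_erase univ (fun i => w i * z i) hmem
  have hBnn : 0 ≤ B := Finset.sum_nonneg fun i hi => by
    have := hcpos i (Finset.ne_of_mem_erase hi)
    positivity
  have hTnn : 0 ≤ T := Finset.sum_nonneg fun i hi => by
    have := hcpos i (Finset.ne_of_mem_erase hi)
    positivity
  -- Cauchy-Schwarz on the erased set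
  have hCS : (∑ i ∈ univ.erase i0, w i * z i)^2 ≤ B * T := by
    have key := Finset.sum_mul_sq_le_sq_mul_sq (univ.erase i0)
      (fun i => w i / Real.sqrt (c i)) (fun i => Real.sqrt (c i) * z i)
    have e1 : ∑ i ∈ univ.erase i0, (w i / Real.sqrt (c i)) * (Real.sqrt (c i) * z i)
        = ∑ i ∈ univ.erase i0, w i * z i := by
      refine Finset.sum_congr rfl fun i hi => ?_
      have hci := hcpos i (Finset.ne_of_mem_erase hi)
      have hs : Real.sqrt (c i) ≠ 0 := ne_of_gt (Real.sqrt_pos.2 hci)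
      field_simp
    have e2 : ∑ i ∈ univ.erase i0, (w i / Real.sqrt (c i))^2 = B := by
      refine Finset.sum_congr rfl fun i hi => ?_
      have hci := hcpos i (Finset.ne_of_mem_erase hi)
      rw [div_pow, Real.sq_sqrt (le_of_lt hci)]
    have e3 : ∑ i ∈ univ.erase i0, (Real.sqrt (c i) * z i)^2 = T := by
      refine Finset.sum_congr rfl fun i hi => ?_
      have hci := hcpos i (Finset.ne_of_mem_erase hi)
      rw [mul_pow, Real.sq_sqrt (le_of_lt hci)]
    rwa [e1, e2, e3] at key
  have hsa : (s - w i0 * z i0)^2 ≤ B * T := by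
    have : s - w i0 * z i0 = ∑ i ∈ univ.erase i0, w i * z i := by linarith [hsplit3]
    rw [this]; exact hCS
  -- hypothesis: w₀²/c₀ + B ≤ -1, so w₀² ≥ (1+B)(-c₀)
  have hyp : (w i0)^2 / c i0 + B ≤ -1 := by rw [hsplit1]; exact hsum
  have hw0 : (w i0)^2 ≥ (1 + B) * (-(c i0)) := by
    have h1 : (w i0)^2 / c i0 ≤ -1 - B := by linarith
    have h2 : (w i0)^2 ≥ (-1 - B) * c i0 := by
      rw [div_le_iff_of_neg hc0] at h1
      linarith
    nlinarith
  rw [← hsplit2]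
  have ha : ∃ a : ℝ, a = w i0 * z i0 := ⟨_, rfl⟩
  obtain ⟨a, ha⟩ := ha
  rw [← ha] at hsa
  have hz0 : ∃ z0 : ℝ, z0 = z i0 := ⟨_, rfl⟩
  obtain ⟨z0, hz0⟩ := hz0
  have hw0' : ∃ w0 : ℝ, w0 = w i0 := ⟨_, rfl⟩
  obtain ⟨w0, hw0'⟩ := hw0'
  have hc0' : ∃ c0 : ℝ, c0 = c i0 := ⟨_, rfl⟩
  obtain ⟨c0, hc0'⟩ := hc0'
  rw [← hz0, ← hc0']
  rw [← hw0', ← hc0'] at hw0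
  rw [← hz0, ← hw0'] at ha
  rw [← hc0'] at hc0
  clear_value B T s
  clear hsum hcpos hz0 hw0' hc0' hB hT hs hsplit1 hsplit2 hsplit3 hCS hyp hmem hi0
  clear z w c i0 hn
  -- goal: 0 ≤ c0 * z0 ^2 + T + s^2
  rcases eq_or_lt_of_le hBnn with hB0 | hBpos
  · -- B = 0 : s = a
    have hsa0 : (s - a)^2 ≤ 0 := by rw [← hB0] at hsa; linarith
    have hseq : s = a := by nlinarith [sq_nonneg (s - a)]
    have hw : w0^2 ≥ -c0 := by rw [← hB0] at hw0; linarith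
    have h2 : a^2 ≥ (-c0) * z0^2 := by rw [ha]; nlinarith [sq_nonneg z0]
    have h3 : s^2 = a^2 := by rw [hseq]
    nlinarith [hTnn]
  · -- B > 0
    have hkey : (1 + B) * ((s - a)^2 + B * s^2) = ((1 + B)*s - a)^2 + B * a^2 := by ring
    have h1 : B * (c0 * z0^2 + T + s^2) ≥ B * c0 * z0^2 + (s - a)^2 + B * s^2 := by
      nlinarith [hsa]
    have h2 : (1 + B) * ((s - a)^2 + B * s^2) ≥ B * a^2 := by
      rw [hkey]; nlinarith [sq_nonneg ((1 + B)*s - a)]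
    have h3 : B * a^2 ≥ B * (1 + B) * (-c0) * z0^2 := by
      have he : a^2 = w0^2 * z0^2 := by rw [ha]; ring
      rw [he]
      nlinarith [mul_nonneg (mul_nonneg hBpos.le
        (by linarith : (0:ℝ) ≤ w0^2 - (1+B)*(-c0))) (sq_nonneg z0)]
    have h4 := mul_le_mul_of_nonneg_left h1 (by linarith : (0:ℝ) ≤ 1+B)
    have h5 : B*(1+B)*(c0*z0^2) + B*a^2 ≤ (1+B)*(B*(c0*z0^2 + T + s^2)) := by
      nlinarith [h4, h2]
    have h6 : 0 ≤ (1+B)*(B*(c0*z0^2 + T + s^2)) := by linarith [h3, h5]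
    nlinarith [h6, mul_pos (show (0:ℝ) < 1+B by linarith) hBpos]

/-- quantitative version, with a coercivity constant. -/
lemma psd_eps {n : ℕ} (hn : 2 ≤ n) (c w : Fin n → ℝ)
    (hc0 : c ⟨0, Nat.lt_of_lt_of_le two_pos hn⟩ < 0)
    (hcpos : ∀ i : Fin n, i ≠ ⟨0, Nat.lt_of_lt_of_le two_pos hn⟩ → 0 < c i)
    (hsum : ∑ i, (w i)^2 / c i < -1) :
    ∃ ε > 0, ∀ z : Fin n → ℝ,
      ε * ∑ i, (z i)^2 ≤ ∑ i, c i * (z i)^2 + (∑ i, w i * z i)^2 := by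
  set i0 : Fin n := ⟨0, Nat.lt_of_lt_of_le two_pos hn⟩ with hi0
  set i1 : Fin n := ⟨1, Nat.lt_of_lt_of_le one_lt_two hn⟩ with hi1
  -- continuity of F ε = ∑ wᵢ²/(cᵢ - ε) at 0
  have hcne : ∀ i : Fin n, c i ≠ 0 := by
    intro i
    by_cases hi : i = i0
    · rw [hi]; exact ne_of_lt hc0
    · exact ne_of_gt (hcpos i hi)
  have hFc : ContinuousAt (fun ε : ℝ => ∑ i, (w i)^2 / (c i - ε)) 0 := by
    apply tendsto_finset_sum
    intro i _
    exact ContinuousAt.div continuousAt_const (continuousAt_const.sub continuousAt_id)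
      (by simpa using hcne i)
  have hF0 : ∑ i, (w i)^2 / (c i - (0:ℝ)) < -1 := by simpa using hsum
  have hev : ∀ᶠ ε in nhds (0:ℝ), (∑ i, (w i)^2 / (c i - ε)) < -1 :=
    hFc.eventually (gt_mem_nhds hF0)
  obtain ⟨δ, hδ, hball⟩ := Metric.eventually_nhds_iff.mp hev
  have hne : (univ.erase i0).Nonempty := ⟨i1, by
    simp [hi0, hi1, Finset.mem_erase, Fin.ext_iff]⟩
  set m : ℝ := ((univ.erase i0).image c).min' (hne.image c) with hm
  have hmpos : 0 < m := by
    obtain ⟨j, hj, hjm⟩ := Finset.mem_image.mp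
      (((univ.erase i0).image c).min'_mem (hne.image c))
    rw [hm, ← hjm]
    exact hcpos j (Finset.ne_of_mem_erase hj)
  have hmle : ∀ i : Fin n, i ≠ i0 → m ≤ c i := by
    intro i hi
    exact Finset.min'_le _ _ (Finset.mem_image_of_mem c (by simp [Finset.mem_erase, hi]))
  set ε : ℝ := min (δ/2) (m/2) with hε
  have hεpos : 0 < ε := lt_min (by linarith) (by linarith)
  refine ⟨ε, hεpos, ?_⟩
  intro z
  have hF : ∑ i, (w i)^2 / (c i - ε) < -1 := by
    apply hball
    rw [Real.dist_eq, sub_zero, abs_of_pos hεpos]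
    calc ε ≤ δ/2 := min_le_left _ _
    _ < δ := by linarith
  have happ := psd hn (fun i => c i - ε) w
    (by show c i0 - ε < 0; linarith)
    (fun i hi => by have := hmle i hi
                    have : ε < c i := by
                      calc ε ≤ m/2 := min_le_right _ _
                      _ < m := by linarith
                      _ ≤ c i := hmle i hi
                    show (0:ℝ) < c i - ε; linarith)
    (le_of_lt hF) z
  have hsplit : ∑ i, (c i - ε) * (z i)^2 = ∑ i, c i * (z i)^2 - ε * ∑ i, (z i)^2 := by
    rw [Finset.mul_sum, ← Finset.sum_sub_distrib]
    exact Finset.sum_congr rfl fun i _ => by ring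
  rw [hsplit] at happ
  linarith



lemma hderiv {n : ℕ} (α ψ : Fin n → ℝ) (ν : ℝ) (h : ℝ → ℝ)
    (hh : ∀ t, h t = (∑ i, 4 * (ψ i)^2 / (t - 2 * ν + 2 * α i)^2) - t)
    (t : ℝ) (hd : ∀ i, t - 2 * ν + 2 * α i ≠ 0) :
    deriv h t = -(∑ i, 8 * (ψ i)^2 / (t - 2 * ν + 2 * α i)^3) - 1 := by
  have hfun : h = fun s => (∑ i, 4 * (ψ i)^2 / (s - 2 * ν + 2 * α i)^2) - s :=
    funext hh
  have hterm : ∀ i : Fin n, HasDerivAt (fun s : ℝ => 4 * (ψ i)^2 / (s - 2 * ν + 2 * α i)^2)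
      (-(8 * (ψ i)^2 / (t - 2 * ν + 2 * α i)^3)) t := by
    intro i
    have hu : HasDerivAt (fun s : ℝ => (s - 2 * ν + 2 * α i)^2)
        (2 * (t - 2 * ν + 2 * α i)) t := by
      have h1 : HasDerivAt (fun s : ℝ => s - 2 * ν + 2 * α i) 1 t := by
        simpa using ((hasDerivAt_id t).sub_const (2*ν)).add_const (2*α i)
      have h2 := h1.fun_pow 2
      simpa using h2
    have hne : (t - 2 * ν + 2 * α i)^2 ≠ 0 := pow_ne_zero _ (hd i)
    have hq := (hasDerivAt_const t (4 * (ψ i)^2)).fun_div hu hne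
    refine hq.congr_deriv ?_
    symm
    rw [neg_div', div_eq_div_iff (pow_ne_zero 3 (hd i)) (pow_ne_zero 2 hne)]
    ring
  have hsum : HasDerivAt (fun s : ℝ => ∑ i, 4 * (ψ i)^2 / (s - 2 * ν + 2 * α i)^2)
      (∑ i, -(8 * (ψ i)^2 / (t - 2 * ν + 2 * α i)^3)) t :=
    HasDerivAt.fun_sum fun i _ => hterm i
  have hfin : HasDerivAt h ((∑ i, -(8 * (ψ i)^2 / (t - 2 * ν + 2 * α i)^3)) - 1) t := by
    rw [hfun]
    exact hsum.sub (hasDerivAt_id t)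
  rw [hfin.deriv, Finset.sum_neg_distrib]


lemma poly4_deriv (a0 a1 a2 a3 a4 : ℝ) :
    HasDerivAt (fun x : ℝ => a0 + a1*x + a2*x^2 + a3*x^3 + a4*x^4) a1 0 := by
  have h0 : HasDerivAt (fun x : ℝ => a0) 0 (0:ℝ) := hasDerivAt_const _ _
  have h1 : HasDerivAt (fun x : ℝ => a1*x) a1 (0:ℝ) := by
    simpa using (hasDerivAt_id (0:ℝ)).const_mul a1
  have h2 : HasDerivAt (fun x : ℝ => a2*x^2) 0 (0:ℝ) := by
    simpa using (hasDerivAt_pow 2 (0:ℝ)).const_mul a2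
  have h3 : HasDerivAt (fun x : ℝ => a3*x^3) 0 (0:ℝ) := by
    simpa using (hasDerivAt_pow 3 (0:ℝ)).const_mul a3
  have h4 : HasDerivAt (fun x : ℝ => a4*x^4) 0 (0:ℝ) := by
    simpa using (hasDerivAt_pow 4 (0:ℝ)).const_mul a4
  simpa using ((((h0.fun_add h1).fun_add h2).fun_add h3).fun_add h4)

lemma sum_one {n : ℕ} (G : Fin n → ℝ) (i0 : Fin n)
    (hz : ∀ j, j ≠ i0 → G j = 0) : ∑ j, G j = G i0 := by
  rw [← Finset.add_sum_erase univ G (mem_univ i0)]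
  have : ∑ j ∈ univ.erase i0, G j = 0 :=
    Finset.sum_eq_zero fun j hj => hz j (Finset.ne_of_mem_erase hj)
  rw [this, add_zero]

lemma sum_two {n : ℕ} (G : Fin n → ℝ) (i0 i1 : Fin n) (hne : i0 ≠ i1)
    (hz : ∀ j, j ≠ i0 → j ≠ i1 → G j = 0) : ∑ j, G j = G i0 + G i1 := by
  rw [← Finset.add_sum_erase univ G (mem_univ i0)]
  congr 1
  have hi1 : i1 ∈ univ.erase i0 := by simp [Finset.mem_erase, hne.symm]
  rw [← Finset.add_sum_erase _ G hi1]
  have : ∑ j ∈ (univ.erase i0).erase i1, G j = 0 :=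
    Finset.sum_eq_zero fun j hj => by
      simp only [Finset.mem_erase] at hj
      exact hz j hj.2.1 hj.1
  rw [this, add_zero]

end Stmt9

section Test
open Stmt9

set_option maxHeartbeats 1000000 in
theorem stmt9 {n : ℕ} (hn : 2 ≤ n) (α ψ : Fin n → ℝ) (hα : Monotone α) (ν : ℝ)
    (g : (Fin n → ℝ) → ℝ)
    (hg : ∀ w, g w = (1/2) * ((1/2) * ∑ i, (w i)^2 - ν)^2
        + (1/2) * ∑ i, α i * (w i)^2 - ∑ i, ψ i * w i)
    (h : ℝ → ℝ)
    (hh : ∀ t, h t = (∑ i, 4 * (ψ i)^2 / (t - 2 * ν + 2 * α i)^2) - t) :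
    ((∃ w : Fin n → ℝ, IsLocalMin g w ∧ ¬ ∀ v, g w ≤ g v) ↔
      (∃ t ∈ Set.Ioo (max (2 * ν - 2 * α ⟨1, hn⟩) 0) (2 * ν - 2 * α ⟨0, by omega⟩),
        h t = 0 ∧ 0 < deriv h t)) ∧
    (∀ t ∈ Set.Ioo (max (2 * ν - 2 * α ⟨1, hn⟩) 0) (2 * ν - 2 * α ⟨0, by omega⟩),
      h t = 0 → 0 < deriv h t →
        IsLocalMin g (fun i => 2 * ψ i / (t - 2 * ν + 2 * α i)) ∧
        ¬ ∀ v, g (fun i => 2 * ψ i / (t - 2 * ν + 2 * α i)) ≤ g v) := by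
  set i0 : Fin n := ⟨0, by omega⟩ with hi0def
  set i1 : Fin n := ⟨1, hn⟩ with hi1def
  have hi10 : i1 ≠ i0 := by
    simp [hi0def, hi1def, Fin.ext_iff]
  have hα01 : ∀ i : Fin n, i ≠ i0 → α i1 ≤ α i := by
    intro i hi
    apply hα
    rw [Fin.le_def]
    show 1 ≤ i.val
    rcases Nat.eq_zero_or_pos i.val with h0 | h1
    · exact absurd (Fin.ext h0 : i = i0) hi
    · omega
  have hα0 : ∀ i : Fin n, α i0 ≤ α i := by
    intro i
    apply hα
    rw [Fin.le_def]
    exact Nat.zero_le _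
  -- ===================== sufficiency =====================
  have main2 : ∀ t ∈ Set.Ioo (max (2 * ν - 2 * α i1) 0) (2 * ν - 2 * α i0),
      h t = 0 → 0 < deriv h t →
        IsLocalMin g (fun i => 2 * ψ i / (t - 2 * ν + 2 * α i)) ∧
        ¬ ∀ v, g (fun i => 2 * ψ i / (t - 2 * ν + 2 * α i)) ≤ g v := by
    rintro t ⟨htlo, hthi⟩ h0 h1
    have ht1 : 2*ν - 2*α i1 < t := lt_of_le_of_lt (le_max_left _ _) htlo
    have ht0 : 0 < t := lt_of_le_of_lt (le_max_right _ _) htlo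
    set w : Fin n → ℝ := fun i => 2 * ψ i / (t - 2 * ν + 2 * α i) with hwdef
    have hd0 : t - 2*ν + 2*α i0 < 0 := by linarith [hthi]
    have hdpos : ∀ i : Fin n, i ≠ i0 → 0 < t - 2*ν + 2*α i := by
      intro i hi
      have := hα01 i hi
      linarith
    have hdne : ∀ i : Fin n, t - 2*ν + 2*α i ≠ 0 := by
      intro i
      by_cases hi : i = i0
      · rw [hi]; exact ne_of_lt hd0
      · exact ne_of_gt (hdpos i hi)
    have hsq : ∀ i : Fin n, (w i)^2 = 4 * (ψ i)^2 / (t - 2*ν + 2*α i)^2 := by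
      intro i
      rw [hwdef]
      rw [div_pow]
      congr 1
      ring
    have hS : ∑ i, (w i)^2 = t := by
      have h2 := hh t
      rw [h0] at h2
      have h3 : ∑ i, 4 * (ψ i)^2 / (t - 2*ν + 2*α i)^2 = t := by linarith
      rw [← h3]
      exact Finset.sum_congr rfl fun i _ => hsq i
    have hcrit : ∀ i : Fin n, ((∑ j, (w j)^2)/2 - ν + α i) * w i - ψ i = 0 := by
      intro i
      rw [hS, hwdef]
      field_simp [hdne i]
      ring
    have hβ : ∑ i, (w i)^2 / (t/2 - ν + α i) < -1 := by
      have hder := hderiv α ψ ν h hh t hdne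
      rw [hder] at h1
      have h2 : ∑ i, 8 * (ψ i)^2 / (t - 2*ν + 2*α i)^3 < -1 := by linarith
      have h3 : ∑ i, (w i)^2 / (t/2 - ν + α i)
          = ∑ i, 8 * (ψ i)^2 / (t - 2*ν + 2*α i)^3 := by
        refine Finset.sum_congr rfl fun i _ => ?_
        rw [hsq i]
        have h2ne : t/2 - ν + α i ≠ 0 := by
          intro hcon; apply hdne i; linarith
        rw [div_div, div_eq_div_iff (mul_ne_zero (pow_ne_zero 2 (hdne i)) h2ne)
          (pow_ne_zero 3 (hdne i))]
        ring
      rw [h3]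
      exact h2
    obtain ⟨ε, hεpos, hQ⟩ := psd_eps hn (fun i => t/2 - ν + α i) w
      (by show t/2 - ν + α i0 < 0; linarith)
      (by intro i hi; show 0 < t/2 - ν + α i; have := hdpos i hi; linarith)
      hβ
    have hw0ne' : True := trivial
    have hw0ne : w i0 ≠ 0 := by
      intro hw0
      have hnn : 0 ≤ ∑ i, (w i)^2 / (t/2 - ν + α i) := by
        apply Finset.sum_nonneg
        intro i _
        by_cases hi : i = i0
        · rw [hi, hw0]
          simp
        · have h2 : 0 < t/2 - ν + α i := by have := hdpos i hi; linarith
          positivity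
      linarith
    clear_value w
    clear hwdef hsq
    constructor
    · -- local min
      show IsLocalMin g w
      set δ : ℝ := ε / Real.sqrt ((n:ℝ)*t + 1) with hδdef
      have hnt : (0:ℝ) < (n:ℝ)*t + 1 := by positivity
      have hrt : 0 < Real.sqrt ((n:ℝ)*t + 1) := Real.sqrt_pos.2 hnt
      have hδpos : 0 < δ := div_pos hεpos hrt
      have hδ2 : ((n:ℝ)*t) * δ^2 ≤ ε^2 := by
        have hδsq : δ^2 = ε^2 / ((n:ℝ)*t + 1) := by
          rw [hδdef, div_pow, Real.sq_sqrt hnt.le]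
        rw [hδsq]
        have he : (n:ℝ)*t*(ε^2/((n:ℝ)*t+1)) = ((n:ℝ)*t*ε^2)/((n:ℝ)*t+1) := by ring
        rw [he, div_le_iff₀ hnt]
        nlinarith [sq_nonneg ε]
      have hev : ∀ᶠ v in nhds w, g w ≤ g v := by
        rw [Metric.eventually_nhds_iff]
        refine ⟨δ, hδpos, ?_⟩
        intro v hv
        have hveq : v = fun j => w j + (v j - w j) := by funext j; ring
        rw [hveq, master α ψ ν g hg w (fun j => v j - w j)]
        have hL : ∑ i, (((∑ j, (w j)^2)/2 - ν + α i) * w i - ψ i) * (v i - w i) = 0 :=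
          Finset.sum_eq_zero fun i _ => by rw [hcrit i, zero_mul]
        rw [hL]
        have hZb : ∑ i, (v i - w i)^2 ≤ (n:ℝ) * δ^2 := by
          have hone : ∀ i ∈ (univ : Finset (Fin n)), (v i - w i)^2 ≤ δ^2 := by
            intro i _
            have h1 : |v i - w i| ≤ dist v w := by
              rw [← Real.dist_eq]
              exact dist_le_pi_dist v w i
            have h2 : |v i - w i| < δ := lt_of_le_of_lt h1 hv
            nlinarith [sq_abs (v i - w i), abs_nonneg (v i - w i)]
          calc ∑ i, (v i - w i)^2 ≤ (univ : Finset (Fin n)).card • δ^2 :=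
                Finset.sum_le_card_nsmul _ _ _ hone
          _ = (n:ℝ) * δ^2 := by
                simp [Finset.card_univ, nsmul_eq_mul]
        have hCS : (∑ i, w i * (v i - w i))^2 ≤ t * ∑ i, (v i - w i)^2 := by
          have := Finset.sum_mul_sq_le_sq_mul_sq univ w (fun i => v i - w i)
          rw [hS] at this
          exact this
        have hQz := hQ (fun i => v i - w i)
        have hZnn : (0:ℝ) ≤ ∑ i, (v i - w i)^2 :=
          Finset.sum_nonneg fun i _ => sq_nonneg _
        have htZ : t * (∑ i, (v i - w i)^2) ≤ ε^2 := by
          calc t * (∑ i, (v i - w i)^2) ≤ t * ((n:ℝ) * δ^2) := by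
                apply mul_le_mul_of_nonneg_left hZb ht0.le
          _ = ((n:ℝ)*t) * δ^2 := by ring
          _ ≤ ε^2 := hδ2
        have hcoef : ∀ i : Fin n, (∑ j, (w j)^2)/2 - ν + α i = t/2 - ν + α i := by
          intro i; rw [hS]
        have hsum_eq : ∑ i, ((∑ j, (w j)^2)/2 - ν + α i) * (v i - w i)^2
            = ∑ i, (t/2 - ν + α i) * (v i - w i)^2 :=
          Finset.sum_congr rfl fun i _ => by rw [hcoef i]
        rw [hsum_eq]
        have hPb : -ε ≤ ∑ i, w i * (v i - w i) := by
          nlinarith [hCS, htZ, hεpos]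
        nlinarith [hQz, hZnn, mul_nonneg hZnn (by linarith [hPb] :
          (0:ℝ) ≤ ε + ∑ i, w i * (v i - w i)), sq_nonneg (∑ i, (v i - w i)^2)]
      exact hev
    · -- not a global min
      intro hall
      obtain ⟨z, hzdef⟩ : ∃ z : Fin n → ℝ, z = fun j => if j = i0 then (-2) * w i0 else 0 :=
        ⟨_, rfl⟩
      have hv := hall (fun j => w j + z j)
      rw [master α ψ ν g hg w z] at hv
      have hL : ∑ i, (((∑ j, (w j)^2)/2 - ν + α i) * w i - ψ i) * z i = 0 :=
        Finset.sum_eq_zero fun i _ => by rw [hcrit i, zero_mul]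
      have hs1 : ∑ i, ((∑ j, (w j)^2)/2 - ν + α i) * (z i)^2
          = (t/2 - ν + α i0) * (4 * (w i0)^2) := by
        rw [sum_one (fun i => ((∑ j, (w j)^2)/2 - ν + α i) * (z i)^2) i0
          (fun j hj => by rw [hzdef]; simp [hj])]
        rw [hS, hzdef]
        simp only [eq_self_iff_true, if_true]
        ring
      have hs2 : ∑ i, w i * z i = -2 * (w i0)^2 := by
        rw [sum_one (fun i => w i * z i) i0 (fun j hj => by rw [hzdef]; simp [hj])]
        rw [hzdef]
        simp only [eq_self_iff_true, if_true]
        ring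
      have hs3 : ∑ i, (z i)^2 = 4 * (w i0)^2 := by
        rw [sum_one (fun i => (z i)^2) i0 (fun j hj => by rw [hzdef]; simp [hj])]
        rw [hzdef]
        simp only [eq_self_iff_true, if_true]
        ring
      rw [hL, hs1, hs2, hs3] at hv
      have hwsq : 0 < (w i0)^2 := by
        have := abs_pos.mpr hw0ne
        nlinarith [sq_abs (w i0)]
      have hc0 : t/2 - ν + α i0 < 0 := by linarith
      nlinarith [hv]
  -- ===================== necessity =====================
  have main1 : (∃ w : Fin n → ℝ, IsLocalMin g w ∧ ¬ ∀ v, g w ≤ g v) →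
      (∃ t ∈ Set.Ioo (max (2 * ν - 2 * α i1) 0) (2 * ν - 2 * α i0),
        h t = 0 ∧ 0 < deriv h t) := by
    rintro ⟨w, hmin, hng⟩
    push_neg at hng
    obtain ⟨v0, hv0⟩ := hng
    obtain ⟨c, hc⟩ : ∃ c : Fin n → ℝ, c = fun i => (∑ j, (w j)^2)/2 - ν + α i := ⟨_, rfl⟩
    have hmaster : ∀ z : Fin n → ℝ, g (fun i => w i + z i) = g w
        + (∑ i, (c i * w i - ψ i) * z i) + (1/2) * ∑ i, c i * (z i)^2
        + (1/2) * (∑ i, w i * z i + (∑ i, (z i)^2)/2)^2 := by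
      intro z
      rw [master α ψ ν g hg w z]
      simp only [hc]
    have hc0le : ∀ i : Fin n, c i0 ≤ c i := by
      intro i; rw [hc]; simp only []; linarith [hα0 i]
    have hc1le : ∀ i : Fin n, i ≠ i0 → c i1 ≤ c i := by
      intro i hi; rw [hc]; simp only []; linarith [hα01 i hi]
    -- === criticality ===
    have hcrit : ∀ i : Fin n, c i * w i = ψ i := by
      intro i
      obtain ⟨z, hzdef⟩ : ∃ z : Fin n → ℝ, z = fun j => if j = i then (1:ℝ) else 0 := ⟨_, rfl⟩
      have hform : ∀ x : ℝ, g (fun j => w j + x * z j)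
          = g w + (c i * w i - ψ i)*x + (c i/2 + (w i)^2/2)*x^2 + (w i/2)*x^3 + (1/8)*x^4 := by
        intro x
        rw [hmaster (fun j => x * z j)]
        have e1 : ∑ j, (c j * w j - ψ j) * (x * z j) = (c i * w i - ψ i) * x := by
          rw [sum_one (fun j => (c j * w j - ψ j) * (x * z j)) i
            (fun j hj => by rw [hzdef]; simp [hj])]
          rw [hzdef]; simp
        have e2 : ∑ j, c j * (x * z j)^2 = c i * x^2 := by
          rw [sum_one (fun j => c j * (x * z j)^2) i (fun j hj => by rw [hzdef]; simp [hj])]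
          rw [hzdef]; simp
        have e3 : ∑ j, w j * (x * z j) = w i * x := by
          rw [sum_one (fun j => w j * (x * z j)) i (fun j hj => by rw [hzdef]; simp [hj])]
          rw [hzdef]; simp
        have e4 : ∑ j, (x * z j)^2 = x^2 := by
          rw [sum_one (fun j => (x * z j)^2) i (fun j hj => by rw [hzdef]; simp [hj])]
          rw [hzdef]; simp
        rw [e1, e2, e3, e4]
        ring
      have hloc := localmin_dir g w z hmin
      have hder : HasDerivAt (fun x : ℝ => g (fun j => w j + x * z j)) (c i * w i - ψ i) 0 := by
        have heq : (fun x : ℝ => g (fun j => w j + x * z j))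
            = fun x => g w + (c i * w i - ψ i)*x + (c i/2 + (w i)^2/2)*x^2
              + (w i/2)*x^3 + (1/8)*x^4 := funext hform
        rw [heq]
        exact poly4_deriv _ _ _ _ _
      have hz0 := hloc.deriv_eq_zero
      rw [hder.deriv] at hz0
      linarith
    -- === quartic form along any direction ===
    have hformgen : ∀ z : Fin n → ℝ, ∀ x : ℝ,
        g (fun j => w j + x * z j) = g w
          + ((∑ i, c i * (z i)^2 + (∑ i, w i * z i)^2)/2) * x^2
          + ((∑ i, w i * z i) * (∑ i, (z i)^2)/2) * x^3
          + ((∑ i, (z i)^2)^2/8) * x^4 := by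
      intro z x
      rw [hmaster (fun j => x * z j)]
      have p1 : ∑ i, (c i * w i - ψ i) * (x * z i) = 0 :=
        Finset.sum_eq_zero fun i _ => by rw [hcrit i]; ring
      have p2 : ∑ i, c i * (x * z i)^2 = x^2 * ∑ i, c i * (z i)^2 := by
        rw [Finset.mul_sum]; exact Finset.sum_congr rfl fun i _ => by ring
      have p3 : ∑ i, w i * (x * z i) = x * ∑ i, w i * z i := by
        rw [Finset.mul_sum]; exact Finset.sum_congr rfl fun i _ => by ring
      have p4 : ∑ i, (x * z i)^2 = x^2 * ∑ i, (z i)^2 := by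
        rw [Finset.mul_sum]; exact Finset.sum_congr rfl fun i _ => by ring
      rw [p1, p2, p3, p4]
      ring
    -- === second-order necessary condition ===
    have hQ : ∀ z : Fin n → ℝ, 0 ≤ ∑ i, c i * (z i)^2 + (∑ i, w i * z i)^2 := by
      intro z
      by_contra hneg
      push_neg at hneg
      exact dir_contra g w z _ _ _ hmin (hformgen z) (Or.inl (by linarith))
    -- === c i0 < 0 ===
    have hc0 : c i0 < 0 := by
      by_contra hge
      push_neg at hge
      have hle' : g w ≤ g v0 := by
        have hveq : v0 = fun j => w j + (v0 j - w j) := by funext j; ring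
        rw [hveq, hmaster (fun j => v0 j - w j)]
        have hL : ∑ i, (c i * w i - ψ i) * (v0 i - w i) = 0 :=
          Finset.sum_eq_zero fun i _ => by rw [hcrit i]; ring
        rw [hL]
        have h2 : 0 ≤ ∑ i, c i * (v0 i - w i)^2 :=
          Finset.sum_nonneg fun i _ =>
            mul_nonneg (le_trans hge (hc0le i)) (sq_nonneg _)
        nlinarith [sq_nonneg (∑ i, w i * (v0 i - w i) + (∑ i, (v0 i - w i)^2)/2)]
      exact absurd hv0 (not_lt.mpr hle')
    -- === w i0 ≠ 0 ===
    have hw0ne : w i0 ≠ 0 := by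
      intro hw0
      obtain ⟨z, hzdef⟩ : ∃ z : Fin n → ℝ, z = fun j => if j = i0 then (1:ℝ) else 0 := ⟨_, rfl⟩
      have hQz := hQ z
      have e1 : ∑ i, c i * (z i)^2 = c i0 := by
        rw [sum_one (fun i => c i * (z i)^2) i0 (fun j hj => by rw [hzdef]; simp [hj])]
        rw [hzdef]; simp
      have e2 : ∑ i, w i * z i = w i0 := by
        rw [sum_one (fun i => w i * z i) i0 (fun j hj => by rw [hzdef]; simp [hj])]
        rw [hzdef]; simp
      rw [e1, e2, hw0] at hQz
      nlinarith [hQz, hc0]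
    have hw0sq : 0 < (w i0)^2 := by
      have := abs_pos.mpr hw0ne
      nlinarith [sq_abs (w i0)]
    -- === 0 < c i1 ===
    have hc1 : 0 < c i1 := by
      by_contra hle
      push_neg at hle
      by_cases hcase : c i1 < 0 ∨ w i1 ≠ 0
      · obtain ⟨z, hzdef⟩ : ∃ z : Fin n → ℝ,
            z = fun j => if j = i0 then -(w i1) else if j = i1 then w i0 else 0 := ⟨_, rfl⟩
        have hQz := hQ z
        have e1 : ∑ i, c i * (z i)^2 = c i0 * (w i1)^2 + c i1 * (w i0)^2 := by
          rw [sum_two (fun i => c i * (z i)^2) i0 i1 hi10.symm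
            (fun j h0 h1 => by rw [hzdef]; simp [h0, h1])]
          rw [hzdef]; simp [hi10]
        have e2 : ∑ i, w i * z i = 0 := by
          rw [sum_two (fun i => w i * z i) i0 i1 hi10.symm
            (fun j h0 h1 => by rw [hzdef]; simp [h0, h1])]
          rw [hzdef]; simp [hi10]
          ring
        rw [e1, e2] at hQz
        rcases hcase with hlt | hwne
        · nlinarith [hQz, mul_nonneg (neg_nonneg.mpr hc0.le) (sq_nonneg (w i1)),
            mul_pos (neg_pos.mpr hlt) hw0sq]
        · have hw1sq : 0 < (w i1)^2 := by
            have := abs_pos.mpr hwne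
            nlinarith [sq_abs (w i1)]
          nlinarith [hQz, mul_pos (neg_pos.mpr hc0) hw1sq,
            mul_nonneg (neg_nonneg.mpr hle) (sq_nonneg (w i0))]
      · push_neg at hcase
        obtain ⟨hcge, hw1⟩ := hcase
        have hceq : c i1 = 0 := le_antisymm hle hcge
        obtain ⟨δ, hδ, hball⟩ := localmin_ball g w hmin
        obtain ⟨W, hW⟩ : ∃ W : ℝ, W = w i0 := ⟨_, rfl⟩
        have hWne : W ≠ 0 := hW ▸ hw0ne
        have hWpos : 0 < |W| := abs_pos.mpr hWne
        have hWsq : 0 < W^2 := by nlinarith [sq_abs W]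
        obtain ⟨x, hxdef⟩ : ∃ x : ℝ, x = min (|W|/2) (δ/2) := ⟨_, rfl⟩
        have hxpos : 0 < x := by rw [hxdef]; exact lt_min (by linarith) (by linarith)
        have hx1 : x ≤ |W|/2 := hxdef ▸ min_le_left _ _
        have hx2 : x ≤ δ/2 := hxdef ▸ min_le_right _ _
        have hxW : x^2 ≤ W^2 := by nlinarith [sq_abs W]
        obtain ⟨u, hu⟩ : ∃ u : ℝ, u = Real.sqrt (W^2 - x^2) := ⟨_, rfl⟩
        have hu2 : u^2 = W^2 - x^2 := by rw [hu]; exact Real.sq_sqrt (by nlinarith)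
        have hunn : 0 ≤ u := hu ▸ Real.sqrt_nonneg _
        have huleW : u ≤ |W| := by
          rw [hu]
          have h1 : Real.sqrt (W^2 - x^2) ≤ Real.sqrt (W^2) :=
            Real.sqrt_le_sqrt (by nlinarith)
          rwa [Real.sqrt_sq_eq_abs] at h1
        obtain ⟨a, ha⟩ : ∃ a : ℝ, a = if 0 < W then -W + u else -W - u := ⟨_, rfl⟩
        have haeq : a^2 + 2*W*a + x^2 = 0 := by
          rw [ha]; split_ifs with hWs
          · linear_combination hu2
          · linear_combination hu2
        have hane : a ≠ 0 := by
          intro h0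
          rw [h0] at haeq
          nlinarith [haeq, hxpos]
        have hasq : 0 < a^2 := by
          have := abs_pos.mpr hane
          nlinarith [sq_abs a]
        have habs : |a| ≤ x^2/|W| := by
          rw [ha]; split_ifs with hWs
          · have hWabs : |W| = W := abs_of_pos hWs
            have huleW' : u ≤ W := by rw [hWabs] at huleW; exact huleW
            have hle0 : -W + u ≤ 0 := by linarith
            rw [abs_of_nonpos hle0, hWabs, le_div_iff₀ hWs]
            nlinarith [hu2, hunn]
          · have hWneg : W < 0 := lt_of_le_of_ne (not_lt.mp hWs) hWne
            have hWabs : |W| = -W := abs_of_neg hWneg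
            have huleW' : u ≤ -W := by rw [hWabs] at huleW; exact huleW
            have hge0 : 0 ≤ -W - u := by linarith
            rw [abs_of_nonneg hge0, hWabs, le_div_iff₀ (by linarith : (0:ℝ) < -W)]
            nlinarith [hu2, hunn]
        have habslt : |a| < δ := by
          have h1 : x^2/|W| ≤ x/2 := by
            rw [div_le_iff₀ hWpos]
            nlinarith [hxpos]
          linarith [habs, hx2, hxpos]
        obtain ⟨z, hzdef⟩ : ∃ z : Fin n → ℝ,
            z = fun j => if j = i0 then a else if j = i1 then x else 0 := ⟨_, rfl⟩
        have hvlt : g (fun j => w j + z j) < g w := by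
          rw [hmaster z]
          have hL : ∑ i, (c i * w i - ψ i) * z i = 0 :=
            Finset.sum_eq_zero fun i _ => by rw [hcrit i]; ring
          have e1 : ∑ i, c i * (z i)^2 = c i0 * a^2 + c i1 * x^2 := by
            rw [sum_two (fun i => c i * (z i)^2) i0 i1 hi10.symm
              (fun j h0 h1 => by rw [hzdef]; simp [h0, h1])]
            rw [hzdef]; simp [hi10]
          have e2 : ∑ i, w i * z i = W * a + w i1 * x := by
            rw [sum_two (fun i => w i * z i) i0 i1 hi10.symm
              (fun j h0 h1 => by rw [hzdef]; simp [h0, h1])]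
            rw [hzdef]; simp [hi10, hW]
          have e3 : ∑ i, (z i)^2 = a^2 + x^2 := by
            rw [sum_two (fun i => (z i)^2) i0 i1 hi10.symm
              (fun j h0 h1 => by rw [hzdef]; simp [h0, h1])]
            rw [hzdef]; simp [hi10]
          rw [hL, e1, e2, e3, hceq, hw1]
          have hzero : W * a + 0 * x + (a^2 + x^2)/2 = 0 := by linarith [haeq]
          rw [hzero]
          nlinarith [hasq, hc0]
        have hdist : dist (fun j => w j + z j) w < δ := by
          rw [dist_pi_lt_iff hδ]
          intro b
          have hbe : dist ((fun j => w j + z j) b) (w b) = |z b| := by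
            rw [Real.dist_eq]; simp
          rw [hbe, hzdef]
          show |if b = i0 then a else if b = i1 then x else 0| < δ
          split_ifs with hb0 hb1
          · exact habslt
          · rw [abs_of_pos hxpos]; linarith
          · simpa using hδ
        exact absurd (hball _ hdist) (not_le.mpr hvlt)
    -- === assemble remaining facts ===
    have hcipos : ∀ i : Fin n, i ≠ i0 → 0 < c i := fun i hi =>
      lt_of_lt_of_le hc1 (hc1le i hi)
    have hcne : ∀ i : Fin n, c i ≠ 0 := by
      intro i
      by_cases hi : i = i0
      · rw [hi]; exact ne_of_lt hc0
      · exact ne_of_gt (hcipos i hi)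
    have hZpos : 0 < ∑ i, (w i / c i)^2 := by
      have h1 : (w i0 / c i0)^2 ≤ ∑ i, (w i / c i)^2 :=
        Finset.single_le_sum (f := fun i => (w i / c i)^2)
          (fun i _ => sq_nonneg _) (mem_univ i0)
      have h2 : 0 < (w i0 / c i0)^2 := by
        have := abs_pos.mpr (div_ne_zero hw0ne (hcne i0))
        nlinarith [sq_abs (w i0 / c i0)]
      linarith
    -- === strict secular inequality ===
    have hβlt : ∑ i, (w i)^2 / c i < -1 := by
      by_contra hge
      push_neg at hge
      have hstar1 : ∑ i, c i * (w i / c i)^2 = ∑ i, (w i)^2 / c i :=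
        Finset.sum_congr rfl fun i _ => by
          field_simp [hcne i]
      have hstar2 : ∑ i, w i * (w i / c i) = ∑ i, (w i)^2 / c i :=
        Finset.sum_congr rfl fun i _ => by
          ring
      rcases eq_or_lt_of_le hge with heq | hgt
      · -- β = -1 : cubic contradiction
        apply dir_contra g w (fun i => w i / c i) _ _ _ hmin (hformgen _)
        right
        constructor
        · rw [hstar1, hstar2, ← heq]; ring
        · rw [hstar2, ← heq]
          intro hcon
          have : ∑ i, (w i / c i)^2 = 0 := by linarith [hcon]
          linarith [hZpos]
      · -- β > -1 : contradiction with hQ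
        have hmem0 : i0 ∈ (univ : Finset (Fin n)) := mem_univ _
        obtain ⟨B, hB⟩ : ∃ B, B = ∑ i ∈ univ.erase i0, (w i)^2 / c i := ⟨_, rfl⟩
        obtain ⟨m, hm⟩ : ∃ m, m = (w i0)^2 / c i0 := ⟨_, rfl⟩
        have hβeq : m + B = ∑ i, (w i)^2 / c i := by
          rw [hm, hB]
          exact Finset.add_sum_erase univ (fun i => (w i)^2 / c i) hmem0
        have hmneg : m < 0 := by rw [hm]; exact div_neg_of_pos_of_neg hw0sq hc0
        have hBnn : 0 ≤ B := by
          rw [hB]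
          exact Finset.sum_nonneg fun i hi =>
            div_nonneg (sq_nonneg _) (hcipos i (Finset.ne_of_mem_erase hi)).le
        have hgt' : -1 < m + B := by rw [hβeq]; exact hgt
        obtain ⟨τ, hτf⟩ : ∃ τ : ℝ, m*τ^2 + B + (τ*m + B)^2 < 0 := by
          rcases lt_or_ge m (-1) with hm1 | hm1
          · have hBpos : 0 < B := by linarith
            refine ⟨B/(-1-m), ?_⟩
            obtain ⟨τ, hτdef⟩ : ∃ τ : ℝ, τ = B/(-1-m) := ⟨_, rfl⟩
            rw [← hτdef]
            have h1m : (0:ℝ) < -1 - m := by linarith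
            have hτpos : 0 < τ := hτdef ▸ div_pos hBpos h1m
            have hτ1 : 1 < τ := by
              rw [hτdef]
              exact (one_lt_div h1m).2 (by linarith)
            have hprod : τ * (-1-m) = B := by
              rw [hτdef]; field_simp
            have hkey : m*τ^2 + B + (τ*m + B)^2 = (1+m)*(τ*(τ-1)) := by
              rw [← hprod]; ring
            rw [hkey]
            exact mul_neg_of_neg_of_pos (by linarith)
              (mul_pos hτpos (by linarith))
          · rcases eq_or_lt_of_le hBnn with hB0 | hBpos
            · refine ⟨1, ?_⟩
              rw [← hB0]
              have hm1' : -1 < m := by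
                rw [← hB0] at hgt'; linarith
              nlinarith [hmneg, hm1']
            · obtain ⟨τ, hτdef⟩ : ∃ τ : ℝ, τ = (B*(1+B)+1)/(2*(-m)*B) := ⟨_, rfl⟩
              refine ⟨τ, ?_⟩
              have hτeq : 2*m*B*τ = -(B*(1+B)+1) := by
                rw [hτdef]
                field_simp [ne_of_lt hmneg, ne_of_gt hBpos]
              have hquad : m*(1+m)*τ^2 ≤ 0 := by
                have hx : 0 ≤ (-m)*(1+m)*τ^2 :=
                  mul_nonneg (mul_nonneg (by linarith) (by linarith)) (sq_nonneg τ)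
                nlinarith [hx]
              have hexp : m*τ^2 + B + (τ*m + B)^2
                  = m*(1+m)*τ^2 + 2*m*B*τ + B*(1+B) := by ring
              rw [hexp, hτeq]
              linarith [hquad]
        obtain ⟨z, hzdef⟩ : ∃ z : Fin n → ℝ,
            z = fun j => if j = i0 then τ * w i0 / c i0 else w j / c j := ⟨_, rfl⟩
        have hQz := hQ z
        have e1 : ∑ i, c i * (z i)^2 = m*τ^2 + B := by
          rw [← Finset.add_sum_erase univ (fun i => c i * (z i)^2) hmem0]
          have t1 : c i0 * (z i0)^2 = m*τ^2 := by
            rw [hzdef]; simp only [if_pos rfl, eq_self_iff_true, if_true]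
            rw [hm]
            field_simp [hcne i0]
          have t2 : ∑ i ∈ univ.erase i0, c i * (z i)^2 = B := by
            rw [hB]
            refine Finset.sum_congr rfl fun i hi => ?_
            rw [hzdef]
            simp only [if_neg (Finset.ne_of_mem_erase hi)]
            field_simp [hcne i]
          rw [t1, t2]
        have e2 : ∑ i, w i * z i = τ*m + B := by
          rw [← Finset.add_sum_erase univ (fun i => w i * z i) hmem0]
          have t1 : w i0 * z i0 = τ*m := by
            rw [hzdef]; simp only [if_pos rfl, eq_self_iff_true, if_true]
            rw [hm]
            field_simp [hcne i0]
          have t2 : ∑ i ∈ univ.erase i0, w i * z i = B := by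
            rw [hB]
            refine Finset.sum_congr rfl fun i hi => ?_
            rw [hzdef]
            simp only [if_neg (Finset.ne_of_mem_erase hi)]
            ring
          rw [t1, t2]
        rw [e1, e2] at hQz
        linarith [hτf, hQz]
    -- === final assembly ===
    have hcid : ∀ i : Fin n, (∑ j, (w j)^2) - 2*ν + 2*α i = 2 * c i := by
      intro i; rw [hc]; simp only []; ring
    have hdne : ∀ i : Fin n, (∑ j, (w j)^2) - 2*ν + 2*α i ≠ 0 := by
      intro i; rw [hcid i]
      exact mul_ne_zero two_ne_zero (hcne i)
    have hSpos : 0 < ∑ j, (w j)^2 := by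
      have h1 : (w i0)^2 ≤ ∑ j, (w j)^2 :=
        Finset.single_le_sum (f := fun j => (w j)^2) (fun j _ => sq_nonneg _) (mem_univ i0)
      linarith [hw0sq]
    have hc0' : (∑ j, (w j)^2)/2 - ν + α i0 < 0 := by
      have := hc0; rw [hc] at this; exact this
    have hc1' : 0 < (∑ j, (w j)^2)/2 - ν + α i1 := by
      have := hc1; rw [hc] at this; exact this
    refine ⟨∑ j, (w j)^2, ⟨?_, ?_⟩, ?_, ?_⟩
    · exact max_lt (by linarith) hSpos
    · linarith
    · rw [hh]
      have hsum2 : ∑ i, 4*(ψ i)^2/((∑ j, (w j)^2) - 2*ν + 2*α i)^2 = ∑ i, (w i)^2 := by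
        refine Finset.sum_congr rfl fun i _ => ?_
        rw [hcid i, ← hcrit i]
        rw [div_eq_iff (pow_ne_zero 2 (mul_ne_zero two_ne_zero (hcne i)))]
        ring
      rw [hsum2]
      ring
    · have hder := hderiv α ψ ν h hh (∑ j, (w j)^2) hdne
      have hsum3 : ∑ i, 8*(ψ i)^2/((∑ j, (w j)^2) - 2*ν + 2*α i)^3 = ∑ i, (w i)^2 / c i := by
        refine Finset.sum_congr rfl fun i _ => ?_
        rw [hcid i, ← hcrit i]
        rw [div_eq_div_iff (pow_ne_zero 3 (mul_ne_zero two_ne_zero (hcne i))) (hcne i)]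
        ring
      rw [hder, hsum3]
      linarith [hβlt]

  exact ⟨⟨main1, fun ⟨t, ht, h0, h1⟩ => ⟨_, (main2 t ht h0 h1).1, (main2 t ht h0 h1).2⟩⟩, main2⟩

end Test
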